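/- Let G be a compact (Hausdorff) topological group with normalized Haar measure m, and let A ⊆ G be a measurable subset with m(A) > 0. Then for every positive integer k there exists an open neighborhood U of the identity in G such that for all u1, …, uk ∈ U, the set A ∩ Au1 ∩ ⋯ ∩ Auk has positive Haar measure. -/

import Mathlib

open MeasureTheory Set ENNReal

/-- The commutator `[a,b] = a⁻¹ * b⁻¹ * a * b`. -/
def pcomm {G : Type*} [Group G] (a b : G) : G := a⁻¹ * b⁻¹ * a * b

/-- The triple commutator `[a,b,c] = [[a,b],c]`. -/
def pcomm3 {G : Type*} [Group G] (a b c : G) : G := pcomm (pcomm a b) c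

section Aux

open Measure ENNReal

variable {G : Type*} [Group G] [TopologicalSpace G]
    [IsTopologicalGroup G] [CompactSpace G] [T2Space G]
    [MeasurableSpace G] [BorelSpace G]

/-- On a compact group, the Haar measure is invariant under right translations. -/
theorem haar_map_mul_right' (g : G) :
    (Measure.haar : Measure G).map (· * g) = Measure.haar := by
  have h2 : ((Measure.haar : Measure G).map (· * g)).Regular :=
    Regular.map (Homeomorph.mulRight g)
  have hc : (Measure.haar : Measure G).map (· * g) =
      haarScalarFactor ((Measure.haar : Measure G).map (· * g)) Measure.haar • Measure.haar :=
    isMulLeftInvariant_eq_smul_of_regular _ _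
  set c := haarScalarFactor ((Measure.haar : Measure G).map (· * g)) Measure.haar
  have huniv : ((Measure.haar : Measure G).map (· * g)) univ = (Measure.haar : Measure G) univ := by
    rw [Measure.map_apply (measurable_mul_const g) .univ, preimage_univ]
  rw [hc] at huniv
  have h0 : (Measure.haar : Measure G) univ ≠ 0 :=
    (measure_pos_of_nonempty_interior _ (by simp)).ne'
  have ht : (Measure.haar : Measure G) univ ≠ ⊤ := measure_ne_top _ _
  have hc1 : (c : ℝ≥0∞) * (Measure.haar : Measure G) univ
      = 1 * (Measure.haar : Measure G) univ := by
    rw [Measure.smul_apply, ENNReal.smul_def, smul_eq_mul] at huniv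
    rw [one_mul]; exact huniv
  have : (c : ℝ≥0∞) = 1 := (ENNReal.mul_left_inj h0 ht).1 hc1
  have hcc : c = 1 := by exact_mod_cast this
  rw [hc, hcc, one_smul]

instance haar_isMulRightInvariant' : IsMulRightInvariant (Measure.haar : Measure G) :=
  ⟨fun g => haar_map_mul_right' g⟩

theorem haar_mul_right_image' (S : Set G) (hS : MeasurableSet S) (g : G) :
    Measure.haar ((· * g) '' S) = Measure.haar S := by
  have : (· * g) '' S = (· * g⁻¹) ⁻¹' S := by
    ext x; simp [Set.mem_image, eq_comm]
  rw [this, measure_preimage_mul_right]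

end Aux

theorem translates_positive_measure {G : Type*} [Group G] [TopologicalSpace G]
    [IsTopologicalGroup G] [CompactSpace G] [T2Space G]
    [MeasurableSpace G] [BorelSpace G]
    (A : Set G) (hA : MeasurableSet A) (hpos : 0 < Measure.haar A)
    (k : ℕ) (hk : 0 < k) :
    ∃ U : Set G, IsOpen U ∧ (1 : G) ∈ U ∧
      ∀ u : Fin k → G, (∀ i, u i ∈ U) →
        0 < Measure.haar (A ∩ ⋂ i, (· * u i) '' A) := by
  classical
  have hAfin : Measure.haar A ≠ ⊤ := measure_ne_top _ _
  have hA0 : Measure.haar A ≠ 0 := hpos.ne'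
  -- get a compact subset of positive measure
  obtain ⟨K, hKA, hKc, hKlt⟩ :=
    hA.exists_isCompact_lt_add (μ := Measure.haar) hAfin
      (ENNReal.half_pos hA0).ne'
  have hK0 : Measure.haar K ≠ 0 := by
    intro h
    rw [h, zero_add] at hKlt
    exact absurd hKlt (not_lt.2 (ENNReal.half_le_self))
  have hKfin : Measure.haar K ≠ ⊤ := measure_ne_top _ _
  set ε : ℝ≥0∞ := Measure.haar K / 2 / k with hε
  have hε0 : ε ≠ 0 := by
    rw [hε]
    exact (ENNReal.div_ne_zero.2 ⟨(ENNReal.half_pos hK0).ne', by simp⟩)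
  obtain ⟨U, hKU, hUopen, hUlt⟩ := hKc.exists_isOpen_lt_add (μ := Measure.haar) hε0
  obtain ⟨V, hV1, hKVU⟩ := compact_open_separated_mul_right hKc hUopen hKU
  obtain ⟨W, hWV, hWopen, hW1⟩ := mem_nhds_iff.1 hV1
  refine ⟨W ∩ W⁻¹, hWopen.inter hWopen.inv, ⟨hW1, by simpa using hW1⟩, ?_⟩
  intro u hu
  -- key estimate: the measure of `K \ K·(u i)` is `< ε`
  have key : ∀ i, Measure.haar (K \ (· * u i) '' K) < ε := by
    intro i
    have hui : (u i)⁻¹ ∈ V := hWV (hu i).2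
    have himg : (· * (u i)⁻¹) '' K ⊆ U := by
      intro x hx
      obtain ⟨y, hy, rfl⟩ := hx
      exact hKVU (Set.mul_mem_mul hy hui)
    have hmeasK : MeasurableSet K := hKc.isClosed.measurableSet
    have hmeasKi : MeasurableSet ((· * (u i)⁻¹) '' K) :=
      (Homeomorph.mulRight (u i)⁻¹).isCompact_image.2 hKc |>.isClosed.measurableSet
    have hdiff : Measure.haar (U \ K) < ε :=
      measure_diff_lt_of_lt_add hKc.isClosed.nullMeasurableSet hKU hKfin hUlt
    have heq : K \ (· * u i) '' K = (· * u i) '' ((· * (u i)⁻¹) '' K \ K) := by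
      rw [Set.image_diff (mul_left_injective (u i))]
      rw [← Set.image_comp]
      simp [Function.comp]
    calc Measure.haar (K \ (· * u i) '' K)
        = Measure.haar ((· * (u i)⁻¹) '' K \ K) := by
          rw [heq, haar_mul_right_image' _ (hmeasKi.diff hmeasK)]
      _ ≤ Measure.haar (U \ K) := measure_mono (Set.diff_subset_diff_left himg)
      _ < ε := hdiff
  -- the intersection of the translates of K
  set S : Set G := K ∩ ⋂ i, (· * u i) '' K with hS
  have hSsub : S ⊆ A ∩ ⋂ i, (· * u i) '' A := by
    apply Set.inter_subset_inter (Set.Subset.trans (le_refl _) hKA)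
    exact Set.iInter_mono fun i => Set.image_mono hKA
  refine lt_of_lt_of_le ?_ (measure_mono hSsub)
  by_contra hcon
  push_neg at hcon
  have hS0 : Measure.haar S = 0 := le_antisymm hcon zero_le
  have hcover : K ⊆ S ∪ ⋃ i, (K \ (· * u i) '' K) := by
    intro x hx
    by_cases h : ∀ i, x ∈ (· * u i) '' K
    · exact Or.inl ⟨hx, Set.mem_iInter.2 h⟩
    · push_neg at h
      obtain ⟨i, hi⟩ := h
      exact Or.inr (Set.mem_iUnion.2 ⟨i, hx, hi⟩)
  have hbound : Measure.haar K ≤ Measure.haar K / 2 := by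
    calc Measure.haar K ≤ Measure.haar (S ∪ ⋃ i, (K \ (· * u i) '' K)) := measure_mono hcover
      _ ≤ Measure.haar S + Measure.haar (⋃ i, (K \ (· * u i) '' K)) := measure_union_le _ _
      _ ≤ 0 + ∑ i : Fin k, Measure.haar (K \ (· * u i) '' K) := by
          rw [hS0]; exact add_le_add le_rfl (measure_iUnion_fintype_le _ _)
      _ ≤ ∑ _i : Fin k, ε := by
          rw [zero_add]; exact Finset.sum_le_sum fun i _ => (key i).le
      _ = k * ε := by simp [mul_comm]
      _ ≤ Measure.haar K / 2 := by
          rw [hε]; exact ENNReal.mul_div_le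
  exact absurd hbound (not_le.2 (ENNReal.half_lt_self hK0 hKfin))
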